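/- Let X and Y be i.i.d. random variables each having the normal distribution N(0, τ²) with τ² > 0. Then the random variable k(X,Y) = 2XY/√(X² + Y²) (defined arbitrarily on the null event {X = Y = 0}) again has the normal distribution N(0, τ²). -/

import Mathlib

open MeasureTheory ProbabilityTheory Real Set
open scoped ENNReal NNReal

namespace SheppAux

noncomputable def k (p : ℝ × ℝ) : ℝ := 2 * p.1 * p.2 / Real.sqrt (p.1 ^ 2 + p.2 ^ 2)

lemma measurable_k : Measurable k :=
  ((measurable_const.mul measurable_fst).mul measurable_snd).div
    (((continuous_fst.pow 2).add (continuous_snd.pow 2)).sqrt.measurable)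

/-- Lebesgue integral version of the polar coordinates change of variables. -/
lemma lintegral_comp_polarCoord_symm (g : ℝ × ℝ → ℝ≥0∞) :
    ∫⁻ p in polarCoord.target, ENNReal.ofReal p.1 * g (polarCoord.symm p)
      = ∫⁻ p, g p := by
  set B : ℝ × ℝ → ℝ × ℝ →L[ℝ] ℝ × ℝ := fun p =>
    LinearMap.toContinuousLinearMap (Matrix.toLin (Module.Basis.finTwoProd ℝ) (Module.Basis.finTwoProd ℝ)
      !![Real.cos p.2, -p.1 * Real.sin p.2; Real.sin p.2, p.1 * Real.cos p.2])
  have A : ∀ p ∈ polarCoord.target,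
      HasFDerivWithinAt polarCoord.symm (B p) polarCoord.target p := fun p _ =>
    (hasFDerivAt_polarCoord_symm p).hasFDerivWithinAt
  have B_det : ∀ p, (B p).det = p.1 := by
    intro p
    conv_rhs => rw [← one_mul p.1, ← cos_sq_add_sin_sq p.2]
    simp only [B, neg_mul, LinearMap.det_toContinuousLinearMap, LinearMap.det_toLin,
      Matrix.det_fin_two_of, sub_neg_eq_add]
    ring
  have hinj : Set.InjOn polarCoord.symm polarCoord.target := polarCoord.symm.injOn
  have himg : polarCoord.symm '' polarCoord.target = polarCoord.source :=
    polarCoord.symm_image_target_eq_source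
  symm
  calc
    ∫⁻ p, g p = ∫⁻ p in polarCoord.source, g p := by
      rw [← setLIntegral_univ]
      exact (setLIntegral_congr polarCoord_source_ae_eq_univ.symm)
    _ = ∫⁻ p in polarCoord.symm '' polarCoord.target, g p := by rw [himg]
    _ = ∫⁻ p in polarCoord.target, ENNReal.ofReal |(B p).det| * g (polarCoord.symm p) := by
      exact lintegral_image_eq_lintegral_abs_det_fderiv_mul volume
        polarCoord.open_target.measurableSet A hinj g
    _ = ∫⁻ p in polarCoord.target, ENNReal.ofReal p.1 * g (polarCoord.symm p) := by
      refine setLIntegral_congr_fun polarCoord.open_target.measurableSet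
        (fun p hp => ?_)
      rw [B_det, abs_of_pos hp.1]

lemma gaussianPDFReal_polar (v : ℝ≥0) (r θ : ℝ) :
    gaussianPDFReal 0 v (r * Real.cos θ) * gaussianPDFReal 0 v (r * Real.sin θ)
      = gaussianPDFReal 0 v r * gaussianPDFReal 0 v 0 := by
  simp only [gaussianPDFReal, sub_zero]
  rw [mul_mul_mul_comm, ← Real.exp_add, mul_mul_mul_comm, ← Real.exp_add]
  congr 1
  rw [← add_div, ← add_div]
  congr 1
  linear_combination (-(r ^ 2) / (2 * (v : ℝ))) * Real.cos_sq_add_sin_sq θ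

lemma gaussianPDF_polar (v : ℝ≥0) (r θ : ℝ) :
    gaussianPDF 0 v (r * Real.cos θ) * gaussianPDF 0 v (r * Real.sin θ)
      = gaussianPDF 0 v r * gaussianPDF 0 v 0 := by
  simp only [gaussianPDF]
  rw [← ENNReal.ofReal_mul (gaussianPDFReal_nonneg _ _ _),
    ← ENNReal.ofReal_mul (gaussianPDFReal_nonneg _ _ _), gaussianPDFReal_polar]

/-- translation invariance for set Lebesgue integrals on `Ioc`. -/
lemma setLIntegral_Ioc_add {H : ℝ → ℝ≥0∞} (hH : Measurable H) (a b c : ℝ) :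
    ∫⁻ x in Ioc a b, H (x + c) = ∫⁻ x in Ioc (a + c) (b + c), H x := by
  have hmap : Measure.map (· + c) volume = volume := map_add_right_eq_self volume c
  have h := setLIntegral_map (f := H) (g := (· + c)) (μ := volume)
    (s := Ioc (a + c) (b + c)) measurableSet_Ioc hH (measurable_add_const c)
  have hpre : (fun x : ℝ => x + c) ⁻¹' Ioc (a + c) (b + c) = Ioc a b := by
    rw [preimage_add_const_Ioc]
    congr 1 <;> ring
  rw [hmap, hpre] at h
  exact h.symm

lemma key_theta {H : ℝ → ℝ≥0∞} (hH : Measurable H) (hper : ∀ x, H (x + 2 * π) = H x) :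
    ∫⁻ θ in Ioo (-π) π, H (2 * θ) = ∫⁻ θ in Ioo (-π) π, H θ := by
  have h2 : (2 : ℝ) ≠ 0 := two_ne_zero
  -- scaling substitution
  have hmap : Measure.map (fun x : ℝ => 2 * x) volume
      = ENNReal.ofReal |(2 : ℝ)⁻¹| • volume := Real.map_volume_mul_left h2
  have hs : ∫⁻ y in Ioo (-(2*π)) (2*π), H y ∂(Measure.map (fun x : ℝ => 2 * x) volume)
      = ∫⁻ x in (fun x : ℝ => 2 * x) ⁻¹' Ioo (-(2*π)) (2*π), H (2 * x) := by
    exact setLIntegral_map measurableSet_Ioo hH (measurable_const_mul 2)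
  have hpre : (fun x : ℝ => 2 * x) ⁻¹' Ioo (-(2*π)) (2*π) = Ioo (-π) π := by
    rw [preimage_const_mul_Ioo₀ _ _ (by norm_num : (0:ℝ) < 2)]
    congr 1 <;> ring
  rw [hpre] at hs
  rw [hmap] at hs
  rw [Measure.restrict_smul, lintegral_smul_measure] at hs
  -- so LHS = (1/2) * ∫ over Ioo (-2π) (2π)
  have hIoc : ∀ (a b : ℝ), ∫⁻ x in Ioo a b, H x = ∫⁻ x in Ioc a b, H x := fun a b =>
    setLIntegral_congr Ioo_ae_eq_Ioc
  -- periodic transfer on Ioc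
  have hshift : ∀ (a b : ℝ), ∫⁻ x in Ioc a b, H x = ∫⁻ x in Ioc (a + 2*π) (b + 2*π), H x := by
    intro a b
    rw [← setLIntegral_Ioc_add hH a b (2*π)]
    exact (setLIntegral_congr_fun measurableSet_Ioc
      (fun x _ => (hper x).symm))
  have hsplit : ∀ (a b c : ℝ), a ≤ b → b ≤ c →
      ∫⁻ x in Ioc a c, H x = (∫⁻ x in Ioc a b, H x) + ∫⁻ x in Ioc b c, H x := by
    intro a b c hab hbc
    rw [← Ioc_union_Ioc_eq_Ioc hab hbc,
      lintegral_union measurableSet_Ioc (Ioc_disjoint_Ioc_of_le le_rfl)]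
  have pi_pos := Real.pi_pos
  have e1 : ∫⁻ x in Ioc (-(2*π)) (2*π), H x = 2 * ∫⁻ x in Ioc (-π) π, H x := by
    have h1 : ∫⁻ x in Ioc (-(2*π)) (2*π), H x
        = (∫⁻ x in Ioc (-(2*π)) 0, H x) + ∫⁻ x in Ioc 0 (2*π), H x :=
      hsplit _ _ _ (by linarith) (by linarith)
    have h2' : ∫⁻ x in Ioc (-(2*π)) 0, H x = ∫⁻ x in Ioc 0 (2*π), H x := by
      have hk := hshift (-(2*π)) 0
      rw [show -(2*π) + 2*π = (0:ℝ) by ring, zero_add] at hk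
      exact hk
    have h3 : ∫⁻ x in Ioc 0 (2*π), H x
        = (∫⁻ x in Ioc 0 π, H x) + ∫⁻ x in Ioc π (2*π), H x :=
      hsplit _ _ _ (by linarith) (by linarith)
    have h4 : ∫⁻ x in Ioc π (2*π), H x = ∫⁻ x in Ioc (-π) 0, H x := by
      have hk := hshift (-π) 0
      rw [show -π + 2*π = π by ring, zero_add] at hk
      exact hk.symm
    have h5 : ∫⁻ x in Ioc (-π) π, H x
        = (∫⁻ x in Ioc (-π) 0, H x) + ∫⁻ x in Ioc 0 π, H x :=
      hsplit _ _ _ (by linarith) (by linarith)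
    rw [h1, h2', h3, h4, h5, two_mul]
    ring
  have h12 : ENNReal.ofReal |(2:ℝ)⁻¹| * 2 = 1 := by
    rw [show |(2:ℝ)⁻¹| = 2⁻¹ by norm_num,
      ENNReal.ofReal_inv_of_pos (by norm_num : (0:ℝ) < 2), ENNReal.ofReal_ofNat]
    exact ENNReal.inv_mul_cancel (by norm_num) (by norm_num)
  rw [hIoc (-(2*π)) (2*π), e1, smul_eq_mul, ← mul_assoc, h12, one_mul] at hs
  rw [← hs]
  exact (hIoc (-π) π).symm

lemma hmu {v : ℝ≥0} (hv : v ≠ 0) {g : ℝ → ℝ≥0∞} (hg : Measurable g) :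
    ∫⁻ x, g x ∂(gaussianReal 0 v) = ∫⁻ x, gaussianPDF 0 v x * g x := by
  rw [gaussianReal_of_var_ne_zero 0 hv,
    lintegral_withDensity_eq_lintegral_mul _ (measurable_gaussianPDF 0 v) hg]
  rfl

lemma prod_gauss_lintegral {v : ℝ≥0} (hv : v ≠ 0) {m : ℝ × ℝ → ℝ≥0∞} (hm : Measurable m) :
    ∫⁻ p, m p ∂((gaussianReal 0 v).prod (gaussianReal 0 v))
      = ∫⁻ p in polarCoord.target,
          ENNReal.ofReal p.1 *
            (gaussianPDF 0 v p.1 * gaussianPDF 0 v 0 * m (polarCoord.symm p)) := by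
  set f := gaussianPDF 0 v with hf
  have hfm : Measurable f := measurable_gaussianPDF 0 v
  have hFull : Measurable fun p : ℝ × ℝ => f p.1 * (f p.2 * m p) :=
    (hfm.comp measurable_fst).mul ((hfm.comp measurable_snd).mul hm)
  have step1 : ∫⁻ p, m p ∂((gaussianReal 0 v).prod (gaussianReal 0 v))
      = ∫⁻ p, f p.1 * (f p.2 * m p) ∂(volume : Measure (ℝ × ℝ)) := by
    rw [lintegral_prod _ hm.aemeasurable]
    have inner : ∀ x : ℝ, ∫⁻ y, m (x, y) ∂(gaussianReal 0 v)
        = ∫⁻ y, f y * m (x, y) := fun x =>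
      hmu hv (hm.comp measurable_prodMk_left)
    simp_rw [inner]
    have hmeasI : Measurable fun x : ℝ => ∫⁻ y, f y * m (x, y) := by
      apply Measurable.lintegral_prod_right (f := fun x y => f y * m (x, y))
      exact (hfm.comp measurable_snd).mul hm
    rw [hmu hv hmeasI]
    have outer : ∀ x : ℝ, f x * ∫⁻ y, f y * m (x, y)
        = ∫⁻ y, f x * (f y * m (x, y)) := fun x =>
      (lintegral_const_mul _ ((hfm).mul (hm.comp measurable_prodMk_left))).symm
    simp_rw [← hf, outer]
    rw [Measure.volume_eq_prod, lintegral_prod _ hFull.aemeasurable]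
  rw [step1, ← lintegral_comp_polarCoord_symm]
  refine setLIntegral_congr_fun polarCoord.open_target.measurableSet
    (fun p _ => ?_)
  congr 1
  rw [polarCoord_symm_apply, ← mul_assoc]
  simp only [hf]
  rw [gaussianPDF_polar]

lemma k_symm {p : ℝ × ℝ} (hp : p ∈ polarCoord.target) :
    k (polarCoord.symm p) = p.1 * Real.sin (2 * p.2) := by
  have hr : 0 < p.1 := hp.1
  rw [polarCoord_symm_apply]
  show 2 * (p.1 * Real.cos p.2) * (p.1 * Real.sin p.2)
      / Real.sqrt ((p.1 * Real.cos p.2) ^ 2 + (p.1 * Real.sin p.2) ^ 2)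
      = p.1 * Real.sin (2 * p.2)
  have hsq : (p.1 * Real.cos p.2) ^ 2 + (p.1 * Real.sin p.2) ^ 2 = p.1 ^ 2 := by
    linear_combination p.1 ^ 2 * Real.cos_sq_add_sin_sq p.2
  rw [hsq, Real.sqrt_sq hr.le, Real.sin_two_mul]
  field_simp

lemma snd_symm (p : ℝ × ℝ) : (polarCoord.symm p).2 = p.1 * Real.sin p.2 := by
  rw [polarCoord_symm_apply]

lemma map_k_eq {v : ℝ≥0} (hv : v ≠ 0) :
    Measure.map k ((gaussianReal 0 v).prod (gaussianReal 0 v)) = gaussianReal 0 v := by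
  have hsnd : Measure.map Prod.snd ((gaussianReal 0 v).prod (gaussianReal 0 v))
      = gaussianReal 0 v := by
    rw [Measure.map_snd_prod]
    simp
  ext s hs
  conv_rhs => rw [← hsnd]
  rw [Measure.map_apply measurable_k hs, Measure.map_apply measurable_snd hs]
  set g : ℝ → ℝ≥0∞ := s.indicator 1 with hg
  have hgm : Measurable g := measurable_one.indicator hs
  have hpre : ∀ (T : ℝ × ℝ → ℝ), Measurable T →
      (gaussianReal 0 v).prod (gaussianReal 0 v) (T ⁻¹' s)
        = ∫⁻ p, g (T p) ∂((gaussianReal 0 v).prod (gaussianReal 0 v)) := by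
    intro T hT
    rw [← lintegral_indicator_one (hT hs)]
    refine lintegral_congr fun p => ?_
    by_cases h : T p ∈ s <;>
      simp [hg, Set.indicator_apply, Set.mem_preimage, h]
  rw [hpre k measurable_k, hpre Prod.snd measurable_snd,
    prod_gauss_lintegral hv (m := fun p => g (k p)) (hgm.comp measurable_k),
    prod_gauss_lintegral hv (m := fun p => g p.2) (hgm.comp measurable_snd)]
  have congr1 : ∫⁻ p in polarCoord.target,
        ENNReal.ofReal p.1 * (gaussianPDF 0 v p.1 * gaussianPDF 0 v 0 * g (k (polarCoord.symm p)))
      = ∫⁻ p in polarCoord.target,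
        ENNReal.ofReal p.1 *
          (gaussianPDF 0 v p.1 * gaussianPDF 0 v 0 * g (p.1 * Real.sin (2 * p.2))) := by
    refine setLIntegral_congr_fun polarCoord.open_target.measurableSet
      (fun p hp => ?_)
    rw [k_symm hp]
  have congr2 : ∫⁻ p in polarCoord.target,
        ENNReal.ofReal p.1 * (gaussianPDF 0 v p.1 * gaussianPDF 0 v 0 * g ((polarCoord.symm p).2))
      = ∫⁻ p in polarCoord.target,
        ENNReal.ofReal p.1 *
          (gaussianPDF 0 v p.1 * gaussianPDF 0 v 0 * g (p.1 * Real.sin p.2)) := by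
    refine setLIntegral_congr_fun polarCoord.open_target.measurableSet
      (fun p hp => ?_)
    rw [snd_symm]
  rw [congr1, congr2]
  -- now reduce to an iterated integral and use `key_theta`
  have htarget : polarCoord.target = Ioi (0:ℝ) ×ˢ Ioo (-π) π := rfl
  have hprod : ∀ (G : ℝ → ℝ → ℝ≥0∞), Measurable (Function.uncurry G) →
      ∫⁻ p in polarCoord.target, G p.1 p.2 ∂(volume : Measure (ℝ × ℝ))
        = ∫⁻ r in Ioi (0:ℝ), ∫⁻ θ in Ioo (-π) π, G r θ := by
    intro G hG
    rw [htarget, Measure.volume_eq_prod, ← Measure.prod_restrict]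
    exact lintegral_prod (fun z => G z.1 z.2) hG.aemeasurable
  have hmeas1 : Measurable (Function.uncurry fun r θ : ℝ =>
      ENNReal.ofReal r * (gaussianPDF 0 v r * gaussianPDF 0 v 0 * g (r * Real.sin (2 * θ)))) := by
    apply Measurable.mul
    · exact measurable_fst.ennreal_ofReal
    · exact (((measurable_gaussianPDF 0 v).comp measurable_fst).mul measurable_const).mul
        (hgm.comp (measurable_fst.mul ((measurable_const.mul measurable_snd).sin)))
  have hmeas2 : Measurable (Function.uncurry fun r θ : ℝ =>
      ENNReal.ofReal r * (gaussianPDF 0 v r * gaussianPDF 0 v 0 * g (r * Real.sin θ))) := by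
    apply Measurable.mul
    · exact measurable_fst.ennreal_ofReal
    · exact (((measurable_gaussianPDF 0 v).comp measurable_fst).mul measurable_const).mul
        (hgm.comp (measurable_fst.mul measurable_snd.sin))
  rw [hprod _ hmeas1, hprod _ hmeas2]
  refine lintegral_congr fun r => ?_
  have hm1 : Measurable fun θ : ℝ => g (r * Real.sin (2 * θ)) :=
    hgm.comp (measurable_const.mul (measurable_const.mul measurable_id').sin)
  have hm2 : Measurable fun θ : ℝ => g (r * Real.sin θ) :=
    hgm.comp (measurable_const.mul measurable_sin)
  have hCmul : Measurable fun θ : ℝ =>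
      gaussianPDF 0 v r * gaussianPDF 0 v 0 * g (r * Real.sin (2 * θ)) :=
    measurable_const.mul hm1
  have hCmul2 : Measurable fun θ : ℝ =>
      gaussianPDF 0 v r * gaussianPDF 0 v 0 * g (r * Real.sin θ) :=
    measurable_const.mul hm2
  rw [lintegral_const_mul _ hCmul, lintegral_const_mul _ hCmul2,
    lintegral_const_mul _ hm1, lintegral_const_mul _ hm2]
  congr 2
  exact key_theta hm2 (fun x => by rw [Real.sin_add_two_pi])

end SheppAux

open SheppAux

/-- **Shepp property of the normal law** (Shepp, 1964). If `X` and `Y` are i.i.d. with law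
`N(0, τ²)`, `τ² > 0`, then `2XY/√(X² + Y²)` again has the law `N(0, τ²)`.
(On the null event `{X = Y = 0}` the quotient is defined via the convention `0/0 = 0`.) -/
theorem shepp_property_normal
    {Ω : Type*} [MeasureSpace Ω] [IsProbabilityMeasure (ℙ : Measure Ω)]
    (X Y : Ω → ℝ) (hX : Measurable X) (hY : Measurable Y)
    (hindep : IndepFun X Y ℙ) (v : NNReal) (hv : 0 < v)
    (hXlaw : Measure.map X ℙ = gaussianReal 0 v)
    (hYlaw : Measure.map Y ℙ = gaussianReal 0 v) :
    Measure.map (fun ω => 2 * X ω * Y ω / Real.sqrt ((X ω) ^ 2 + (Y ω) ^ 2)) ℙ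
      = gaussianReal 0 v := by
  have hpair := (indepFun_iff_map_prod_eq_prod_map_map hX.aemeasurable
    hY.aemeasurable).mp hindep
  rw [hXlaw, hYlaw] at hpair
  have hfun : (fun ω => 2 * X ω * Y ω / Real.sqrt ((X ω) ^ 2 + (Y ω) ^ 2))
      = k ∘ (fun ω => (X ω, Y ω)) := rfl
  rw [hfun, ← Measure.map_map measurable_k (hX.prodMk hY), hpair, map_k_eq hv.ne']
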